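/- Let m be a finite measure, and for each n let (C_i^{(n)})_{i ∈ I_n} be a finite collection of pairwise disjoint measurable sets with Σ_i m(C_i^{(n)}) ≤ M and sup_i m(C_i^{(n)}) ≤ 2^{−n}. Let (ΔX_C) assign to each C an independent Gaussian random variable with mean γ·m(C) and variance σ²·m(C). Then for every ε > 0, Σ_n P(sup_{i ∈ I_n} |ΔX_{C_i^{(n)}}| > ε) < ∞, and hence almost surely sup_{i ∈ I_n} |ΔX_{C_i^{(n)}}| → 0 as n → ∞. -/

import Mathlib

open MeasureTheory ProbabilityTheory Filter Set

section GaussAux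
open Real MeasureTheory ProbabilityTheory Filter Set
open scoped NNReal ENNReal

noncomputable def gaussJ : ℝ := ∫ y : ℝ, y ^ 4 * Real.exp (-y ^ 2)

lemma integrable_pow_four_exp {b : ℝ} (hb : 0 < b) :
    Integrable (fun y : ℝ => y ^ 4 * Real.exp (-b * y ^ 2)) := by
  have h := integrable_rpow_mul_exp_neg_mul_sq hb (s := 4) (by norm_num)
  have e : (fun x : ℝ => x ^ (4 : ℝ) * Real.exp (-b * x ^ 2))
      = fun y : ℝ => y ^ 4 * Real.exp (-b * y ^ 2) := by
    funext x; congr 1; rw [← Real.rpow_natCast x 4]; norm_num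
  exact e ▸ h

lemma gaussJ_nonneg : 0 ≤ gaussJ :=
  integral_nonneg fun y => by positivity

noncomputable def gaussK : ℝ := 4 * gaussJ / Real.sqrt π

lemma gaussK_nonneg : 0 ≤ gaussK := by
  have := gaussJ_nonneg
  have := Real.sqrt_nonneg π
  unfold gaussK; positivity

lemma lintegral_pow_four_centered (μ : ℝ) (v : ℝ≥0) :
    ∫⁻ x, ENNReal.ofReal ((x - μ) ^ 4) ∂(gaussianReal μ v)
      = ENNReal.ofReal (gaussK * (v : ℝ) ^ 2) := by
  by_cases hv : v = 0
  · subst hv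
    rw [gaussianReal_zero_var, lintegral_dirac]
    simp
  · have hv' : 0 < (v : ℝ) := lt_of_le_of_ne v.2 (by exact_mod_cast (Ne.symm hv))
    set b : ℝ := (2 * (v : ℝ))⁻¹ with hb_def
    have hb : 0 < b := by positivity
    have hfun : ∀ x : ℝ, gaussianPDFReal μ v x * (x - μ) ^ 4
        = (Real.sqrt (2 * π * (v : ℝ)))⁻¹ *
          ((fun y : ℝ => y ^ 4 * Real.exp (-b * y ^ 2)) (x - μ)) := by
      intro x
      simp only [gaussianPDFReal]
      rw [show -(x - μ) ^ 2 / (2 * (v : ℝ)) = -b * (x - μ) ^ 2 by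
        rw [hb_def]; field_simp]
      ring
    have hInt : Integrable (fun x => gaussianPDFReal μ v x * (x - μ) ^ 4) := by
      have h1 : Integrable (fun x : ℝ =>
          (Real.sqrt (2 * π * (v : ℝ)))⁻¹ *
            ((fun y : ℝ => y ^ 4 * Real.exp (-b * y ^ 2)) (x - μ))) :=
        ((integrable_pow_four_exp hb).comp_sub_right μ).const_mul _
      exact h1.congr (ae_of_all _ fun x => (hfun x).symm)
    rw [gaussianReal_of_var_ne_zero _ hv,
      lintegral_withDensity_eq_lintegral_mul _ (measurable_gaussianPDF _ _)
        (by fun_prop : Measurable fun x : ℝ => ENNReal.ofReal ((x - μ) ^ 4))]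
    have hmul : (fun x => (gaussianPDF μ v * fun x => ENNReal.ofReal ((x - μ) ^ 4)) x)
        = fun x => ENNReal.ofReal (gaussianPDFReal μ v x * (x - μ) ^ 4) := by
      funext x
      simp only [Pi.mul_apply, gaussianPDF]
      rw [← ENNReal.ofReal_mul (gaussianPDFReal_nonneg _ _ _)]
    rw [hmul, ← ofReal_integral_eq_lintegral_ofReal hInt
      (ae_of_all _ fun x => mul_nonneg (gaussianPDFReal_nonneg _ _ _) (by positivity))]
    congr 1
    set a : ℝ := Real.sqrt (2 * (v : ℝ)) with ha_def
    have ha : 0 < a := Real.sqrt_pos.mpr (by positivity)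
    have ha2 : a ^ 2 = 2 * (v : ℝ) := Real.sq_sqrt (by positivity)
    have hcov := MeasureTheory.Measure.integral_comp_mul_left
      (fun y : ℝ => y ^ 4 * Real.exp (-b * y ^ 2)) a
    have hg : (fun x : ℝ => (fun y : ℝ => y ^ 4 * Real.exp (-b * y ^ 2)) (a * x))
        = fun x : ℝ => (2 * (v : ℝ)) ^ 2 * (x ^ 4 * Real.exp (-x ^ 2)) := by
      funext x
      have h1 : (a * x) ^ 2 = 2 * (v : ℝ) * x ^ 2 := by rw [mul_pow, ha2]
      have h2 : -b * (a * x) ^ 2 = -x ^ 2 := by rw [h1, hb_def]; field_simp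
      have h3 : (a * x) ^ 4 = (2 * (v : ℝ)) ^ 2 * x ^ 4 := by
        rw [show (4 : ℕ) = 2 * 2 from rfl, pow_mul, h1, mul_pow]; ring
      simp only []
      rw [h2, h3]; ring
    rw [hg, integral_const_mul] at hcov
    have hcov2 : (2 * (v : ℝ)) ^ 2 * gaussJ
        = a⁻¹ * ∫ y : ℝ, y ^ 4 * Real.exp (-b * y ^ 2) := by
      rw [gaussJ, hcov, abs_of_pos (inv_pos.mpr ha), smul_eq_mul]
    have hJ : ∫ y : ℝ, y ^ 4 * Real.exp (-b * y ^ 2)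
        = a * ((2 * (v : ℝ)) ^ 2 * gaussJ) := by
      rw [hcov2, ← mul_assoc, mul_inv_cancel₀ ha.ne', one_mul]
    have hs : Real.sqrt (2 * π * (v : ℝ)) = Real.sqrt π * a := by
      rw [ha_def, ← Real.sqrt_mul Real.pi_pos.le,
        show π * (2 * (v : ℝ)) = 2 * π * (v : ℝ) by ring]
    calc ∫ x, gaussianPDFReal μ v x * (x - μ) ^ 4
        = (Real.sqrt (2 * π * (v : ℝ)))⁻¹
            * ∫ x, (fun y : ℝ => y ^ 4 * Real.exp (-b * y ^ 2)) (x - μ) := by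
          simp_rw [hfun]; rw [integral_const_mul]
      _ = (Real.sqrt (2 * π * (v : ℝ)))⁻¹ * ∫ y : ℝ, y ^ 4 * Real.exp (-b * y ^ 2) := by
          rw [integral_sub_right_eq_self (fun y : ℝ => y ^ 4 * Real.exp (-b * y ^ 2)) μ]
      _ = gaussK * (v : ℝ) ^ 2 := by
          rw [hJ, hs, gaussK]
          have hπ : (0:ℝ) < Real.sqrt π := Real.sqrt_pos.mpr Real.pi_pos
          field_simp
          ring

lemma gaussian_lintegral_pow_four_le (μ : ℝ) (v : ℝ≥0) :
    ∫⁻ x, ENNReal.ofReal (x ^ 4) ∂(gaussianReal μ v)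
      ≤ ENNReal.ofReal (8 * (gaussK * (v : ℝ) ^ 2) + 8 * μ ^ 4) := by
  calc ∫⁻ x, ENNReal.ofReal (x ^ 4) ∂(gaussianReal μ v)
      ≤ ∫⁻ x, (ENNReal.ofReal (8 * (x - μ) ^ 4)
          + ENNReal.ofReal (8 * μ ^ 4)) ∂(gaussianReal μ v) := by
        refine lintegral_mono fun x => ?_
        rw [← ENNReal.ofReal_add (by positivity) (by positivity)]
        refine ENNReal.ofReal_le_ofReal ?_
        nlinarith [sq_nonneg ((x - μ) ^ 2 - μ ^ 2), sq_nonneg ((x - μ) - μ),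
          sq_nonneg ((x - μ) + μ), sq_nonneg ((x - μ) * μ), sq_nonneg ((x - μ) ^ 2 + μ ^ 2)]
    _ = ENNReal.ofReal (8 * (gaussK * (v : ℝ) ^ 2) + 8 * μ ^ 4) := by
        rw [lintegral_add_right _ measurable_const, lintegral_const, measure_univ, mul_one]
        have h8 : (0:ℝ) ≤ 8 := by norm_num
        simp_rw [fun x : ℝ => ENNReal.ofReal_mul (p := 8) (q := (x - μ) ^ 4) h8]
        rw [lintegral_const_mul _ (by fun_prop : Measurable fun x : ℝ => ENNReal.ofReal ((x - μ) ^ 4)),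
          lintegral_pow_four_centered, ← ENNReal.ofReal_mul h8,
          ← ENNReal.ofReal_add
            (mul_nonneg h8 (mul_nonneg gaussK_nonneg (by positivity))) (by positivity)]

lemma gaussian_tail_le (μ : ℝ) (v : ℝ≥0) {ε : ℝ} (hε : 0 < ε) :
    gaussianReal μ v {x | ε < |x|}
      ≤ ENNReal.ofReal ((8 * (gaussK * (v : ℝ) ^ 2) + 8 * μ ^ 4) / ε ^ 4) := by
  have hmeas : AEMeasurable (fun x : ℝ => ENNReal.ofReal (x ^ 4)) (gaussianReal μ v) := by
    fun_prop
  have hsub : {x : ℝ | ε < |x|}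
      ⊆ {x : ℝ | ENNReal.ofReal (ε ^ 4) ≤ ENNReal.ofReal (x ^ 4)} := by
    intro x hx
    simp only [mem_setOf_eq] at hx ⊢
    refine ENNReal.ofReal_le_ofReal ?_
    calc ε ^ 4 ≤ |x| ^ 4 := pow_le_pow_left₀ hε.le hx.le 4
      _ = x ^ 4 := by rw [← abs_pow]; exact abs_of_nonneg (by positivity)
  calc gaussianReal μ v {x | ε < |x|}
      ≤ gaussianReal μ v {x | ENNReal.ofReal (ε ^ 4) ≤ ENNReal.ofReal (x ^ 4)} :=
        measure_mono hsub
    _ ≤ (∫⁻ x, ENNReal.ofReal (x ^ 4) ∂(gaussianReal μ v)) / ENNReal.ofReal (ε ^ 4) :=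
        meas_ge_le_lintegral_div hmeas
          (by rw [ne_eq, ENNReal.ofReal_eq_zero, not_le]; positivity) ENNReal.ofReal_ne_top
    _ ≤ ENNReal.ofReal (8 * (gaussK * (v : ℝ) ^ 2) + 8 * μ ^ 4) / ENNReal.ofReal (ε ^ 4) := by
        gcongr
        exact gaussian_lintegral_pow_four_le μ v
    _ = ENNReal.ofReal ((8 * (gaussK * (v : ℝ) ^ 2) + 8 * μ ^ 4) / ε ^ 4) := by
        rw [ENNReal.ofReal_div_of_pos (by positivity)]

end GaussAux

/-- Borel–Cantelli argument of Theorem 7.4: for collections of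
pairwise disjoint sets with total measure ≤ M and mesh ≤ 2^{-n}, and
independent Gaussian increments with mean `γ m(C)` and variance `σ² m(C)`,
the tail probabilities of the sups are summable and the sups tend to 0 a.s. -/
theorem gaussian_increments_sup_tendsto_zero
    {α Ω : Type*} [MeasurableSpace α] [MeasurableSpace Ω]
    (P : Measure Ω) [IsProbabilityMeasure P]
    (m : Measure α) [IsFiniteMeasure m]
    (γ σ M : ℝ) (hM : 0 ≤ M)
    (k : ℕ → ℕ) (C : (n : ℕ) → Fin (k n) → Set α)
    (hCmeas : ∀ n i, MeasurableSet (C n i))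
    (hdisj : ∀ n, Pairwise fun i j : Fin (k n) => Disjoint (C n i) (C n j))
    (htotal : ∀ n, ∑ i : Fin (k n), (m (C n i)).toReal ≤ M)
    (hmesh : ∀ n, ∀ i : Fin (k n), (m (C n i)).toReal ≤ 2 ^ (-(n : ℝ)))
    (ΔX : Set α → Ω → ℝ)
    (hmeasΔ : ∀ s : Set α, MeasurableSet s → Measurable (ΔX s))
    (hgauss : ∀ n, ∀ i : Fin (k n),
      Measure.map (ΔX (C n i)) P
        = gaussianReal (γ * (m (C n i)).toReal)
            (σ ^ 2 * (m (C n i)).toReal).toNNReal)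
    (hindep : iIndepFun
      (fun p : Σ n : ℕ, Fin (k n) => ΔX (C p.1 p.2)) P) :
    ∀ ε : ℝ, 0 < ε →
      Summable (fun n => (P {ω | ∃ i : Fin (k n), ε < |ΔX (C n i) ω|}).toReal) ∧
      ∀ᵐ ω ∂P,
        Tendsto (fun n => ⨆ i : Fin (k n), |ΔX (C n i) ω|) atTop (nhds 0) := by
  have hA0 : 0 ≤ 8 * gaussK * (σ ^ 2) ^ 2 + 8 * γ ^ 4 :=
    add_nonneg (mul_nonneg (mul_nonneg (by norm_num) gaussK_nonneg) (by positivity))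
      (by positivity)
  have key : ∀ ε : ℝ, 0 < ε →
      ∑' n, P {ω | ∃ i : Fin (k n), ε < |ΔX (C n i) ω|} ≠ ⊤ := by
    intro ε hε
    set A : ℝ := 8 * gaussK * (σ ^ 2) ^ 2 + 8 * γ ^ 4 with hA
    set K : ℝ := A * M / ε ^ 4 with hKdef
    have hK0 : 0 ≤ K := div_nonneg (mul_nonneg hA0 hM) (by positivity)
    have hbound : ∀ n, P {ω | ∃ i : Fin (k n), ε < |ΔX (C n i) ω|}
        ≤ ENNReal.ofReal (K * (2⁻¹ : ℝ) ^ n) := by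
      intro n
      set t : ℝ := (2⁻¹ : ℝ) ^ n with ht_def
      have ht0 : 0 < t := by positivity
      have ht1 : t ≤ 1 := pow_le_one₀ (by norm_num) (by norm_num)
      have htm : (2 : ℝ) ^ (-(n : ℝ)) = t := by
        rw [ht_def, inv_pow, ← Real.rpow_natCast 2 n,
          ← Real.rpow_neg (by norm_num : (0:ℝ) ≤ 2)]
      have hset : {ω | ∃ i : Fin (k n), ε < |ΔX (C n i) ω|}
          = ⋃ i : Fin (k n), (ΔX (C n i)) ⁻¹' {x | ε < |x|} := by
        ext ω; simp [Set.mem_iUnion, Set.mem_preimage]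
      rw [hset]
      refine (measure_iUnion_le _).trans ?_
      rw [tsum_fintype]
      have hterm : ∀ i : Fin (k n), P ((ΔX (C n i)) ⁻¹' {x | ε < |x|})
          ≤ ENNReal.ofReal
            ((8 * (gaussK * (((σ ^ 2 * (m (C n i)).toReal).toNNReal : NNReal) : ℝ) ^ 2)
              + 8 * (γ * (m (C n i)).toReal) ^ 4) / ε ^ 4) := by
        intro i
        rw [← Measure.map_apply (hmeasΔ _ (hCmeas n i))
          (show MeasurableSet {x : ℝ | ε < |x|} from
            measurableSet_lt measurable_const (measurable_id.abs)), hgauss n i]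
        exact gaussian_tail_le _ _ hε
      refine (Finset.sum_le_sum fun i _ => hterm i).trans ?_
      rw [← ENNReal.ofReal_sum_of_nonneg (fun i _ =>
        div_nonneg (add_nonneg (mul_nonneg (by norm_num)
          (mul_nonneg gaussK_nonneg (sq_nonneg _))) (by positivity)) (by positivity))]
      refine ENNReal.ofReal_le_ofReal ?_
      have hper : ∀ i : Fin (k n),
          (8 * (gaussK * (((σ ^ 2 * (m (C n i)).toReal).toNNReal : NNReal) : ℝ) ^ 2)
            + 8 * (γ * (m (C n i)).toReal) ^ 4) / ε ^ 4
          ≤ A * t / ε ^ 4 * (m (C n i)).toReal := by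
        intro i
        set mi : ℝ := (m (C n i)).toReal with hmi_def
        have hmi0 : 0 ≤ mi := ENNReal.toReal_nonneg
        have hmi : mi ≤ t := le_of_le_of_eq (hmesh n i) htm
        have hcoe : (((σ ^ 2 * mi).toNNReal : NNReal) : ℝ) = σ ^ 2 * mi :=
          Real.coe_toNNReal _ (by positivity)
        have hq2 : mi ^ 2 ≤ t * mi := by nlinarith
        have h3 : mi ^ 3 ≤ t := by
          calc mi ^ 3 ≤ t ^ 3 := pow_le_pow_left₀ hmi0 hmi 3
            _ ≤ t := by nlinarith [mul_nonneg ht0.le ht0.le]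
        have hq4 : mi ^ 4 ≤ t * mi := by
          calc mi ^ 4 = mi ^ 3 * mi := by ring
            _ ≤ t * mi := mul_le_mul_of_nonneg_right h3 hmi0
        rw [hcoe, div_le_iff₀ (by positivity : (0:ℝ) < ε ^ 4)]
        have hc1 : (0:ℝ) ≤ 8 * gaussK * (σ ^ 2) ^ 2 :=
          mul_nonneg (mul_nonneg (by norm_num) gaussK_nonneg) (by positivity)
        calc 8 * (gaussK * (σ ^ 2 * mi) ^ 2) + 8 * (γ * mi) ^ 4
            = 8 * gaussK * (σ ^ 2) ^ 2 * mi ^ 2 + 8 * γ ^ 4 * mi ^ 4 := by ring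
          _ ≤ 8 * gaussK * (σ ^ 2) ^ 2 * (t * mi) + 8 * γ ^ 4 * (t * mi) :=
              add_le_add (mul_le_mul_of_nonneg_left hq2 hc1)
                (mul_le_mul_of_nonneg_left hq4 (by positivity))
          _ = A * t * mi := by rw [hA]; ring
          _ = A * t / ε ^ 4 * mi * ε ^ 4 := by field_simp
      calc ∑ i : Fin (k n), _ ≤ ∑ i : Fin (k n), A * t / ε ^ 4 * (m (C n i)).toReal :=
            Finset.sum_le_sum fun i _ => hper i
        _ = A * t / ε ^ 4 * ∑ i : Fin (k n), (m (C n i)).toReal := by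
            rw [Finset.mul_sum]
        _ ≤ A * t / ε ^ 4 * M := by
            refine mul_le_mul_of_nonneg_left (htotal n) ?_
            exact div_nonneg (mul_nonneg hA0 ht0.le) (by positivity)
        _ = K * t := by rw [hKdef]; ring
    have hhalf : ENNReal.ofReal (2⁻¹ : ℝ) = (2⁻¹ : ENNReal) := by
      rw [ENNReal.ofReal_inv_of_pos (by norm_num)]
      norm_num
    have htsum : ∑' n, P {ω | ∃ i : Fin (k n), ε < |ΔX (C n i) ω|}
        ≤ ENNReal.ofReal K * (1 - (2⁻¹ : ENNReal))⁻¹ := by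
      calc ∑' n, P {ω | ∃ i : Fin (k n), ε < |ΔX (C n i) ω|}
          ≤ ∑' n, ENNReal.ofReal (K * (2⁻¹ : ℝ) ^ n) := ENNReal.tsum_le_tsum hbound
        _ = ∑' n, ENNReal.ofReal K * (2⁻¹ : ENNReal) ^ n := by
            congr 1; funext n
            rw [ENNReal.ofReal_mul hK0, ENNReal.ofReal_pow (by norm_num), hhalf]
        _ = ENNReal.ofReal K * ∑' n, (2⁻¹ : ENNReal) ^ n := ENNReal.tsum_mul_left
        _ = ENNReal.ofReal K * (1 - (2⁻¹ : ENNReal))⁻¹ := by rw [ENNReal.tsum_geometric]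
    refine ne_top_of_le_ne_top ?_ htsum
    refine ENNReal.mul_ne_top ENNReal.ofReal_ne_top ?_
    rw [ENNReal.one_sub_inv_two, inv_inv]
    exact ENNReal.ofNat_ne_top
  intro ε hε
  refine ⟨ENNReal.summable_toReal (key ε hε), ?_⟩
  have hBC : ∀ᵐ ω ∂P, ∀ J : ℕ, ∀ᶠ n in atTop,
      ∀ i : Fin (k n), |ΔX (C n i) ω| ≤ ((J : ℝ) + 1)⁻¹ := by
    rw [ae_all_iff]
    intro J
    have hpos : (0 : ℝ) < ((J : ℝ) + 1)⁻¹ := by positivity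
    have h0 := measure_limsup_atTop_eq_zero
      (μ := P) (s := fun n => {ω | ∃ i : Fin (k n), ((J : ℝ) + 1)⁻¹ < |ΔX (C n i) ω|})
      (key _ hpos)
    filter_upwards [measure_eq_zero_iff_ae_notMem.mp h0] with ω hω
    rw [mem_limsup_iff_frequently_mem, not_frequently] at hω
    filter_upwards [hω] with n hn i
    simp only [mem_setOf_eq, not_exists, not_lt] at hn
    exact hn i
  filter_upwards [hBC] with ω hω
  rw [Metric.tendsto_atTop]
  intro δ hδ
  obtain ⟨J, hJδ⟩ := exists_nat_one_div_lt hδ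
  obtain ⟨N, hN⟩ := (eventually_atTop).mp (hω J)
  refine ⟨N, fun n hn => ?_⟩
  have hsup0 : 0 ≤ ⨆ i : Fin (k n), |ΔX (C n i) ω| :=
    Real.iSup_nonneg fun i => abs_nonneg _
  have hsup : (⨆ i : Fin (k n), |ΔX (C n i) ω|) ≤ ((J : ℝ) + 1)⁻¹ :=
    Real.iSup_le (fun i => hN n hn i) (by positivity)
  rw [Real.dist_eq, sub_zero, abs_of_nonneg hsup0]
  calc (⨆ i : Fin (k n), |ΔX (C n i) ω|) ≤ ((J : ℝ) + 1)⁻¹ := hsup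
    _ < δ := by rw [← one_div]; exact hJδ
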